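/- Let E be a real inner product space, f : E → ℝ convex and differentiable with L-Lipschitz gradient (L > 0), ψ : E → ℝ convex, F = f + ψ, and x̄ a minimizer of F with F* = F(x̄). Let γ ∈ (0,1] and α ∈ [C₂, C₁] with C₁ ≥ C₂ > 0. Fix x ∈ E, let d minimize d ↦ ⟨∇f(x), d⟩ + (1/(2α))‖d‖² + ψ(x + d) over E, set x⁺ = x + d, and assume F(x⁺) ≤ F(x) − (γ/(2α))‖d‖². Then ‖x⁺ − x̄‖² − ‖x − x̄‖² ≤ 2C₂ (F* − F(x⁺)) + (2LC₁²/γ)(F(x) − F(x⁺)). -/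

import Mathlib

open scoped RealInnerProductSpace

lemma line_hasDerivAt {E : Type*} [NormedAddCommGroup E] [InnerProductSpace ℝ E]
    (f : E → ℝ) (f' : E → E) (hderiv : ∀ y, HasFDerivAt f (innerSL ℝ (f' y)) y)
    (x d : E) (t : ℝ) :
    HasDerivAt (fun s : ℝ => f (x + s • d)) ⟪f' (x + t • d), d⟫ t := by
  have h1 : HasDerivAt (fun s : ℝ => x + s • d) d t := by
    simpa using ((hasDerivAt_id t).smul_const d).const_add x
  exact (hderiv (x + t • d)).comp_hasDerivAt t h1

lemma grad_ineq {E : Type*} [NormedAddCommGroup E] [InnerProductSpace ℝ E]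
    (f : E → ℝ) (f' : E → E) (hfconv : ConvexOn ℝ Set.univ f)
    (hderiv : ∀ y, HasFDerivAt f (innerSL ℝ (f' y)) y) (a b : E) :
    ⟪f' a, b - a⟫ ≤ f b - f a := by
  have hg : ConvexOn ℝ Set.univ (fun t : ℝ => f (a + t • (b - a))) := by
    have := hfconv.comp_affineMap (AffineMap.lineMap a b)
    simpa [Function.comp_def, AffineMap.lineMap_apply, vsub_eq_sub, vadd_eq_add,
      add_comm] using this
  have hD : HasDerivAt (fun t : ℝ => f (a + t • (b - a))) ⟪f' (a + (0:ℝ) • (b - a)), b - a⟫ 0 :=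
    line_hasDerivAt f f' hderiv a (b - a) 0
  have h := hg.le_slope_of_hasDerivAt (Set.mem_univ 0) (Set.mem_univ 1) one_pos (by simpa using hD)
  simpa [slope_def_field] using h

lemma descent_lemma {E : Type*} [NormedAddCommGroup E] [InnerProductSpace ℝ E]
    (f : E → ℝ) (f' : E → E) (L : ℝ)
    (hderiv : ∀ y, HasFDerivAt f (innerSL ℝ (f' y)) y)
    (hlip : ∀ y z, ‖f' y - f' z‖ ≤ L * ‖y - z‖) (x d : E) :
    f (x + d) ≤ f x + ⟪f' x, d⟫ + L / 2 * ‖d‖ ^ 2 := by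
  set q : ℝ → ℝ := fun t => L / 2 * ‖d‖ ^ 2 * t ^ 2 + (⟪f' x, d⟫ * t - f (x + t • d)) with hq
  have hq' : ∀ t : ℝ, HasDerivAt q
      (L / 2 * ‖d‖ ^ 2 * (2 * t) + (⟪f' x, d⟫ - ⟪f' (x + t • d), d⟫)) t := by
    intro t
    have h1 : HasDerivAt (fun t : ℝ => L / 2 * ‖d‖ ^ 2 * t ^ 2) (L / 2 * ‖d‖ ^ 2 * (2 * t)) t := by
      have := (hasDerivAt_pow 2 t).const_mul (L / 2 * ‖d‖ ^ 2)
      exact this.congr_deriv (by norm_num)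
    have h2 : HasDerivAt (fun t : ℝ => ⟪f' x, d⟫ * t) ⟪f' x, d⟫ t := by
      simpa using (hasDerivAt_id t).const_mul ⟪f' x, d⟫
    exact h1.add (h2.sub (line_hasDerivAt f f' hderiv x d t))
  have hcont : Continuous q := by
    have : Differentiable ℝ q := fun t => (hq' t).differentiableAt
    exact this.continuous
  have hmono : MonotoneOn q (Set.Icc (0:ℝ) 1) := by
    apply monotoneOn_of_deriv_nonneg (convex_Icc 0 1) hcont.continuousOn
    · intro t ht
      exact (hq' t).differentiableAt.differentiableWithinAt
    · intro t ht
      rw [interior_Icc] at ht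
      rw [(hq' t).deriv]
      have hcs : ⟪f' (x + t • d) - f' x, d⟫ ≤ ‖f' (x + t • d) - f' x‖ * ‖d‖ :=
        real_inner_le_norm _ _
      have hlipb : ‖f' (x + t • d) - f' x‖ ≤ L * (t * ‖d‖) := by
        have := hlip (x + t • d) x
        simpa [norm_smul, abs_of_nonneg ht.1.le] using this
      have hiff : ⟪f' (x + t • d), d⟫ - ⟪f' x, d⟫ = ⟪f' (x + t • d) - f' x, d⟫ := by
        rw [inner_sub_left]
      nlinarith [norm_nonneg d, mul_le_mul_of_nonneg_right hlipb (norm_nonneg d)]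
  have h01 := hmono (Set.left_mem_Icc.2 zero_le_one) (Set.right_mem_Icc.2 zero_le_one) zero_le_one
  simp only [hq] at h01
  norm_num at h01
  linarith

set_option maxHeartbeats 1000000 in
/-- A single line-search proximal gradient step with step
`α ∈ [C₂, C₁]` and sufficient decrease `F(x⁺) ≤ F(x) − (γ/(2α))‖d‖²` satisfies
`‖x⁺ − x̄‖² − ‖x − x̄‖² ≤ 2C₂(F* − F(x⁺)) + (2LC₁²/γ)(F(x) − F(x⁺))`. -/
theorem proximal_gradient_line_search_one_step_bound
    {E : Type*} [NormedAddCommGroup E] [InnerProductSpace ℝ E]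
    (f : E → ℝ) (f' : E → E) (ψ : E → ℝ) (L : ℝ) (hL : 0 < L)
    (hfconv : ConvexOn ℝ Set.univ f)
    (hderiv : ∀ y, HasFDerivAt f (innerSL ℝ (f' y)) y)
    (hlip : ∀ y z, ‖f' y - f' z‖ ≤ L * ‖y - z‖)
    (hψconv : ConvexOn ℝ Set.univ ψ)
    (F : E → ℝ) (hF : ∀ y, F y = f y + ψ y)
    (xbar : E) (hxbar : ∀ y, F xbar ≤ F y)
    (γ C₁ C₂ : ℝ) (hγ0 : 0 < γ) (hγ1 : γ ≤ 1) (hC₂0 : 0 < C₂) (hC₁ : C₂ ≤ C₁)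
    (α : ℝ) (hα : α ∈ Set.Icc C₂ C₁)
    (x d : E)
    (hd : ∀ z : E,
      ⟪f' x, d⟫ + 1 / (2 * α) * ‖d‖ ^ 2 + ψ (x + d) ≤
        ⟪f' x, z⟫ + 1 / (2 * α) * ‖z‖ ^ 2 + ψ (x + z))
    (hdec : F (x + d) ≤ F x - γ / (2 * α) * ‖d‖ ^ 2) :
    ‖x + d - xbar‖ ^ 2 - ‖x - xbar‖ ^ 2 ≤
      2 * C₂ * (F xbar - F (x + d)) + 2 * L * C₁ ^ 2 / γ * (F x - F (x + d)) := by
  obtain ⟨hαC₂, hαC₁⟩ := hα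
  have hα0 : (0:ℝ) < α := lt_of_lt_of_le hC₂0 hαC₂
  -- prox first-order optimality inequality
  have key : ∀ u : E,
      0 ≤ ⟪f' x, u - d⟫ + ⟪d, u - d⟫ / α + (ψ (x + u) - ψ (x + d)) := by
    intro u
    set A : ℝ := ⟪f' x, u - d⟫ + ⟪d, u - d⟫ / α + (ψ (x + u) - ψ (x + d)) with hA
    set B : ℝ := ‖u - d‖ ^ 2 / (2 * α) with hB
    have hB0 : 0 ≤ B := by positivity
    have step : ∀ t : ℝ, 0 < t → t ≤ 1 → 0 ≤ A + t * B := by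
      intro t ht0 ht1
      have hz := hd (d + t • (u - d))
      have hnorm : ‖d + t • (u - d)‖ ^ 2
          = ‖d‖ ^ 2 + 2 * (t * ⟪d, u - d⟫) + t ^ 2 * ‖u - d‖ ^ 2 := by
        rw [norm_add_sq_real, real_inner_smul_right, norm_smul, mul_pow]
        simp [sq_abs]
      have hinner : ⟪f' x, d + t • (u - d)⟫ = ⟪f' x, d⟫ + t * ⟪f' x, u - d⟫ := by
        rw [inner_add_right, real_inner_smul_right]
      have hpt : x + (d + t • (u - d)) = (1 - t) • (x + d) + t • (x + u) := by
        module
      have hψ' : ψ (x + (d + t • (u - d))) ≤ (1 - t) * ψ (x + d) + t * ψ (x + u) := by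
        rw [hpt]
        exact hψconv.2 (Set.mem_univ (x + d)) (Set.mem_univ (x + u))
          (by linarith) ht0.le (by ring)
      rw [hnorm, hinner] at hz
      have hsplit : (1:ℝ) / (2 * α) * (‖d‖ ^ 2 + 2 * (t * ⟪d, u - d⟫) + t ^ 2 * ‖u - d‖ ^ 2)
          = 1 / (2 * α) * ‖d‖ ^ 2 + t * (⟪d, u - d⟫ / α) + t ^ 2 * B := by
        rw [hB]; field_simp
      rw [hsplit] at hz
      have hmul : 0 ≤ t * (A + t * B) := by
        have hexpand : t * (A + t * B)
            = t * ⟪f' x, u - d⟫ + t * (⟪d, u - d⟫ / α) + t ^ 2 * B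
              + (t * ψ (x + u) - t * ψ (x + d)) := by
          rw [hA]; ring
        rw [hexpand]
        linarith [hz, hψ']
      exact nonneg_of_mul_nonneg_right hmul ht0
    refine le_of_forall_pos_le_add ?_
    intro ε hε
    set t : ℝ := min 1 (ε / (B + 1)) with ht
    have ht0 : 0 < t := lt_min one_pos (div_pos hε (by linarith))
    have ht1 : t ≤ 1 := min_le_left _ _
    have htB : t * B ≤ ε := by
      have h1 : t ≤ ε / (B + 1) := min_le_right _ _
      have h2 : t * (B + 1) ≤ ε := by
        rw [← div_mul_cancel₀ ε (by linarith : B + 1 ≠ 0)]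
        exact mul_le_mul_of_nonneg_right h1 (by linarith)
      nlinarith
    linarith [step t ht0 ht1]
  -- abbreviations
  set n : ℝ := ‖d‖ ^ 2 with hn
  have hn0 : 0 ≤ n := by positivity
  set c : ℝ := ⟪d, xbar - x⟫ with hc
  -- specialize at u = xbar - x
  have hkey := key (xbar - x)
  rw [show x + (xbar - x) = xbar by abel] at hkey
  have hsub1 : ⟪f' x, xbar - x - d⟫ = ⟪f' x, xbar - x⟫ - ⟪f' x, d⟫ := inner_sub_right _ _ _
  have hsub2 : ⟪d, xbar - x - d⟫ = c - n := by
    rw [hc, hn, inner_sub_right, real_inner_self_eq_norm_sq]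
  rw [hsub1, hsub2] at hkey
  have hmulkey := mul_le_mul_of_nonneg_left hkey hα0.le
  have hexpand : α * ((⟪f' x, xbar - x⟫ - ⟪f' x, d⟫) + (c - n) / α + (ψ xbar - ψ (x + d)))
      = α * ((⟪f' x, xbar - x⟫ - ⟪f' x, d⟫) + (ψ xbar - ψ (x + d))) + (c - n) := by
    field_simp; ring
  rw [mul_zero, hexpand] at hmulkey
  have hkey2 : n - c ≤ α * ((⟪f' x, xbar - x⟫ - ⟪f' x, d⟫) + (ψ xbar - ψ (x + d))) := by
    linarith
  -- gradient inequality and descent lemma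
  have hgrad : ⟪f' x, xbar - x⟫ ≤ f xbar - f x := grad_ineq f f' hfconv hderiv x xbar
  have hdesc : f (x + d) ≤ f x + ⟪f' x, d⟫ + L / 2 * n :=
    descent_lemma f f' L hderiv hlip x d
  have hsum : (⟪f' x, xbar - x⟫ - ⟪f' x, d⟫) + (ψ xbar - ψ (x + d))
      ≤ (F xbar - F (x + d)) + L / 2 * n := by
    rw [hF, hF]
    linarith
  have hkey3 : n - c ≤ α * (F xbar - F (x + d)) + α * (L / 2) * n := by
    nlinarith [hkey2, mul_le_mul_of_nonneg_left hsum hα0.le]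
  -- LHS = -2c + n
  have hexpnorm : ‖x + d - xbar‖ ^ 2 = ‖x - xbar‖ ^ 2 + 2 * ⟪x - xbar, d⟫ + n := by
    rw [show x + d - xbar = (x - xbar) + d by abel, norm_add_sq_real, hn]
  have hcomm : ⟪x - xbar, d⟫ = - c := by
    rw [hc, real_inner_comm, ← inner_neg_right]
    congr 1
    abel
  -- sufficient decrease consequences
  have hFle : F xbar - F (x + d) ≤ 0 := by linarith [hxbar (x + d)]
  have hdec' : γ / (2 * α) * n ≤ F x - F (x + d) := by linarith [hdec]
  have hprog : 0 ≤ F x - F (x + d) := by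
    have : 0 ≤ γ / (2 * α) * n := by positivity
    linarith
  have hnle : n ≤ 2 * α / γ * (F x - F (x + d)) := by
    have h2 := mul_le_mul_of_nonneg_left hdec' (le_of_lt (by positivity : (0:ℝ) < 2 * α / γ))
    have h3 : 2 * α / γ * (γ / (2 * α) * n) = n := by
      field_simp
    linarith
  -- combine
  have e1 : α * (L / 2) * n = 1 / 2 * (α * L * n) := by ring
  have hfinal1 : -2 * c + n ≤ 2 * α * (F xbar - F (x + d)) + α * L * n := by
    linarith [hkey3, hn0, e1]
  have hc2 : 2 * α * (F xbar - F (x + d)) ≤ 2 * C₂ * (F xbar - F (x + d)) := by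
    exact mul_le_mul_of_nonpos_right (by linarith) hFle
  have hb : α * L * n ≤ 2 * L * C₁ ^ 2 / γ * (F x - F (x + d)) := by
    have h1 : α * L * n ≤ α * L * (2 * α / γ * (F x - F (x + d))) :=
      mul_le_mul_of_nonneg_left hnle (by positivity)
    have h2 : α * L * (2 * α / γ * (F x - F (x + d))) = 2 * L * α ^ 2 / γ * (F x - F (x + d)) := by
      ring
    have hα2 : α ^ 2 ≤ C₁ ^ 2 := by nlinarith
    have h3 : 2 * L * α ^ 2 / γ * (F x - F (x + d)) ≤ 2 * L * C₁ ^ 2 / γ * (F x - F (x + d)) := by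
      apply mul_le_mul_of_nonneg_right _ hprog
      gcongr
    linarith
  have hLHS : ‖x + d - xbar‖ ^ 2 - ‖x - xbar‖ ^ 2 = -2 * c + n := by
    rw [hexpnorm, hcomm]; ring
  rw [hLHS]
  linarith
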